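/- arXiv:1605.02434 — 2 statements merged into one kernel-verified Lean document; each statement's English description precedes it below -/
import Mathlib

section
/- Let q ≥ 1 be an integer and l an integer, and define G : ℂ → ℂ by G(s) := Σ_{(a,b)} e(a·l/q) · expZeta(b/q, s), the sum running over all pairs (a,b) with 1 ≤ a,b ≤ q and a·b ≡ 1 (mod q), where b/q is taken in ℝ/ℤ. Then for every z ∈ ℂ with Re z < 0 one has G(z) = Γ(1−z) · (2π/q)^{z−1} · [ e((1−z)/4) · Σ_{n ≥ 1, gcd(n,q)=1} e(l·n̄/q) · n^{z−1} + e(−(1−z)/4) · Σ_{n ≥ 1, gcd(n,q)=1} e(−l·n̄/q) · n^{z−1} ], where for each n coprime to q, n̄ ∈ {1,…,q} denotes the inverse of n modulo q; both series on the right converge absolutely. -/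
open Complex

/-- `e(z) = exp(2πiz)`. -/
noncomputable def eC (z : ℂ) : ℂ := Complex.exp (2 * Real.pi * Complex.I * z)

/-- The Kloosterman sum `Kl(m,n;c) = Σ_{x mod c, (x,c)=1} e((mx + nx*)/c)`,
where `x*` is the inverse of `x` modulo `c`. -/
noncomputable def Kl (m n : ℤ) (c : ℕ) : ℂ :=
  ∑ x ∈ Finset.filter (fun x => Nat.gcd x c = 1) (Finset.Icc 1 c),
    eC ((((m * x + n * ((((x : ZMod c))⁻¹.val : ℕ) : ℤ) : ℤ) : ℝ) / c : ℝ))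

/-- `G(s) = Σ_{1 ≤ a,b ≤ q, ab ≡ 1 (q)} e(al/q) expZeta(b/q, s)`. -/
noncomputable def G (q : ℕ) (l : ℤ) (s : ℂ) : ℂ :=
  ∑ a ∈ Finset.Icc 1 q, ∑ b ∈ Finset.Icc 1 q,
    if (a * b) % q = 1 % q then
      eC ((((a : ℤ) * l : ℤ) : ℝ) / q) *
        HurwitzZeta.expZeta (((b : ℝ) / q : ℝ) : UnitAddCircle) s
    else 0

/- ### Auxiliary lemmas -/

private lemma eC_add_int (x : ℝ) (k : ℤ) : eC ((x + k : ℝ) : ℂ) = eC (x : ℂ) := by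
  simp only [eC]
  push_cast
  rw [mul_add, Complex.exp_add,
    show (2:ℂ) * Real.pi * I * k = k * (2 * Real.pi * I) by ring,
    Complex.exp_int_mul_two_pi_mul_I, mul_one]

private lemma eC_congr (q : ℕ) (hq : q ≠ 0) {c d : ℤ} (h : (c : ZMod q) = (d : ZMod q)) :
    eC (((c : ℝ) / q : ℝ) : ℂ) = eC (((d : ℝ) / q : ℝ) : ℂ) := by
  obtain ⟨k, hk⟩ := ((ZMod.intCast_eq_intCast_iff c d q).mp h).dvd
  have hq' : (q : ℝ) ≠ 0 := Nat.cast_ne_zero.mpr hq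
  have h2 : (c : ℝ) / q = (d : ℝ) / q + (-k : ℤ) := by
    have h3 : (d : ℝ) - c = q * k := by exact_mod_cast congrArg Int.cast hk
    push_cast
    field_simp
    linarith
  rw [h2, eC_add_int]

private lemma eC_congr' (q : ℕ) (hq : q ≠ 0) {c d : ℤ} (h : (c : ZMod q) = (d : ZMod q)) :
    eC (((c : ℝ) : ℂ) / (q : ℂ)) = eC (((d : ℝ) : ℂ) / (q : ℂ)) := by
  have h1 : ∀ x : ℤ, ((x:ℝ):ℂ)/(q:ℂ) = (((x:ℝ)/(q:ℝ) : ℝ) : ℂ) := by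
    intro x; push_cast; ring
  rw [h1, h1]
  exact eC_congr q hq h

private lemma norm_eC_real (x : ℝ) : ‖eC (x : ℂ)‖ = 1 := by
  simp only [eC, Complex.norm_exp]
  rw [show (2 * (Real.pi:ℂ) * I * x).re = 0 by simp [Complex.mul_re, Complex.mul_im]]
  exact Real.exp_zero

private lemma norm_eC_div (x : ℝ) (q : ℕ) : ‖eC ((x : ℂ) / (q : ℂ))‖ = 1 := by
  rw [show (x:ℂ)/(q:ℂ) = ((x/(q:ℝ) : ℝ) : ℂ) by push_cast; ring]
  exact norm_eC_real _

private lemma summable_aux (q : ℕ) (z : ℂ) (hz : z.re < 0) (f : ℕ → ℂ) (hf : ∀ n, ‖f n‖ = 1) :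
    Summable (fun n : ℕ => ‖(if 1 ≤ n ∧ Nat.gcd n q = 1 then f n * (n : ℂ) ^ (z - 1) else 0)‖) := by
  have hS : Summable (fun n : ℕ => (n : ℝ) ^ (z.re - 1)) :=
    Real.summable_nat_rpow.mpr (by linarith)
  refine hS.of_nonneg_of_le (fun n => norm_nonneg _) (fun n => ?_)
  split_ifs with h
  · obtain ⟨h1, _⟩ := h
    have hn : (0:ℝ) < n := by exact_mod_cast h1
    rw [norm_mul, hf n, one_mul]
    rw [show ((n:ℂ)) = ((n:ℝ):ℂ) by push_cast; ring]
    rw [Complex.norm_cpow_eq_rpow_re_of_pos hn]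
    simp [Complex.sub_re]
  · simpa using Real.rpow_nonneg (Nat.cast_nonneg n) _

private lemma comb (q : ℕ) (hq : 1 ≤ q) (F : ℕ → ℂ) (hF : Summable F) (P : Finset (ℕ × ℕ))
    (h : ℕ → ℕ)
    (hinj : ∀ p ∈ P, ∀ p' ∈ P, ∀ n n' : ℕ, q * n + h p.2 = q * n' + h p'.2 → p = p' ∧ n = n')
    (hcover : ∀ m, F m ≠ 0 → ∃ p ∈ P, ∃ n, q * n + h p.2 = m) :
    ∑ p ∈ P, ∑' n : ℕ, F (q * n + h p.2) = ∑' m, F m := by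
  classical
  set i : ↥P × ℕ → ℕ := fun x => q * x.2 + h (x.1 : ℕ × ℕ).2 with hi
  have hinj' : Function.Injective i := by
    rintro ⟨⟨p, hp⟩, n⟩ ⟨⟨p', hp'⟩, n'⟩ hx
    obtain ⟨h1, h2⟩ := hinj p hp p' hp' n n' hx
    simp [h1, h2]
  have hrange : Function.support F ⊆ Set.range i := by
    intro m hm
    obtain ⟨p, hp, n, hn⟩ := hcover m hm
    exact ⟨(⟨p, hp⟩, n), hn⟩
  have h1 : ∑' x : ↥P × ℕ, F (i x) = ∑' m, F m := hinj'.tsum_eq hrange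
  have hs : Summable (fun x : ↥P × ℕ => F (i x)) := hF.comp_injective hinj'
  have hsb : ∀ b : ↥P, Summable (fun c : ℕ => F (i (b, c))) := by
    intro b
    refine hF.comp_injective (fun n n' hnn => ?_)
    simp only [hi] at hnn
    have h2 : q * n = q * n' := by omega
    exact Nat.eq_of_mul_eq_mul_left (by omega) h2
  rw [← h1, hs.tsum_prod' hsb, tsum_fintype]
  rw [← Finset.sum_coe_sort P (fun p => ∑' n : ℕ, F (q * n + h p.2))]

private lemma zmod_inv_eq {q : ℕ} (x y : ZMod q) (h : x * y = 1) : x⁻¹ = y := by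
  have hu : IsUnit x := IsUnit.of_mul_eq_one _ h
  calc x⁻¹ = x⁻¹ * (x * y) := by rw [h, mul_one]
  _ = (x⁻¹ * x) * y := by ring
  _ = y := by rw [ZMod.inv_mul_of_unit x hu, one_mul]

private lemma cond_unit (q : ℕ) (a b : ℕ) (hab : (a * b) % q = 1 % q) : (a : ZMod q) * b = 1 := by
  have := (ZMod.natCast_eq_natCast_iff' (a*b) 1 q).mpr hab
  push_cast at this
  simpa using this

private lemma Icc_mod_inj (q a a' : ℕ) (ha : a ∈ Finset.Icc 1 q) (ha' : a' ∈ Finset.Icc 1 q)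
    (h : (a : ZMod q) = (a' : ZMod q)) : a = a' := by
  simp only [Finset.mem_Icc] at ha ha'
  have hmod : a % q = a' % q := (ZMod.natCast_eq_natCast_iff' a a' q).mp h
  by_cases h1 : a = q <;> by_cases h2 : a' = q
  · omega
  · rw [h1, Nat.mod_self, Nat.mod_eq_of_lt (by omega)] at hmod; omega
  · rw [h2, Nat.mod_self, Nat.mod_eq_of_lt (by omega)] at hmod; omega
  · rw [Nat.mod_eq_of_lt (by omega), Nat.mod_eq_of_lt (by omega)] at hmod; omega

private lemma exists_partner (q : ℕ) (hq : 1 ≤ q) (b : ℕ) (hu : IsUnit (b : ZMod q)) :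
    ∃ a ∈ Finset.Icc 1 q, (a * b) % q = 1 % q := by
  haveI : NeZero q := ⟨by omega⟩
  set w := ((b : ZMod q))⁻¹.val with hw
  have hwlt : w < q := ZMod.val_lt _
  refine ⟨if w = 0 then q else w, ?_, ?_⟩
  · split_ifs with h <;> simp only [Finset.mem_Icc] <;> omega
  · rw [← ZMod.natCast_eq_natCast_iff']
    have ha : ((if w = 0 then q else w : ℕ) : ZMod q) = (b : ZMod q)⁻¹ := by
      split_ifs with h
      · rw [ZMod.natCast_self]
        have h3 : (((b : ZMod q)⁻¹.val : ℕ) : ZMod q) = (b:ZMod q)⁻¹ := ZMod.natCast_rightInverse _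
        rw [← h3, ← hw, h, Nat.cast_zero]
      · exact ZMod.natCast_rightInverse _
    rw [Nat.cast_mul, ha, ZMod.inv_mul_of_unit _ hu, Nat.cast_one]

/-- The summand in the first series. -/
private noncomputable def Fp (q : ℕ) (l : ℤ) (z : ℂ) (n : ℕ) : ℂ :=
  if 1 ≤ n ∧ Nat.gcd n q = 1 then
    eC (((l * ((((n : ZMod q))⁻¹.val : ℕ) : ℤ) : ℤ) : ℝ) / q) * (n : ℂ) ^ (z - 1)
  else 0

/-- The summand in the second series. -/
private noncomputable def Fm (q : ℕ) (l : ℤ) (z : ℂ) (n : ℕ) : ℂ :=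
  if 1 ≤ n ∧ Nat.gcd n q = 1 then
    eC (((-(l * ((((n : ZMod q))⁻¹.val : ℕ) : ℤ)) : ℤ) : ℝ) / q) * (n : ℂ) ^ (z - 1)
  else 0


private lemma PW_plus (q : ℕ) (hq : 1 ≤ q) (l : ℤ) (z : ℂ)
    (a b n : ℕ) (ha : a ∈ Finset.Icc 1 q) (hb : b ∈ Finset.Icc 1 q)
    (hab : (a * b) % q = 1 % q) :
    Fp q l z (q * n + b) = (q : ℂ) ^ (z - 1) * eC ((((a : ℤ) * l : ℤ) : ℝ) / q) *
      (1 / ((n : ℂ) + ((((b : ℝ) / (q : ℝ)) : ℝ) : ℂ)) ^ (1 - z)) := by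
  haveI : NeZero q := ⟨by omega⟩
  simp only [Finset.mem_Icc] at ha hb
  have hq0 : (0:ℝ) < q := by exact_mod_cast (by omega : 0 < q)
  have hba : (b : ZMod q) * a = 1 := by rw [mul_comm]; exact cond_unit q a b hab
  have hcop : Nat.Coprime b q := (ZMod.isUnit_iff_coprime b q).mp (IsUnit.of_mul_eq_one _ hba)
  have hmcop : Nat.gcd (q * n + b) q = 1 := by
    have h2 : Nat.Coprime (b + q * n) q := (Nat.coprime_add_mul_left_left b q n).mpr hcop
    rwa [show b + q * n = q * n + b by omega] at h2
  rw [Fp, if_pos ⟨by omega, hmcop⟩]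
  have hmz : ((q * n + b : ℕ) : ZMod q) = (b : ZMod q) := by
    push_cast [ZMod.natCast_self]; ring
  have hinv : (((q * n + b : ℕ) : ZMod q))⁻¹ = (a : ZMod q) :=
    zmod_inv_eq _ _ (by rw [hmz]; exact hba)
  have hv : (((((q * n + b : ℕ) : ZMod q))⁻¹.val : ℕ) : ZMod q) = (a : ZMod q) := by
    rw [ZMod.natCast_rightInverse _, hinv]
  have heC := eC_congr' q (by omega)
    (c := l * (((((q * n + b : ℕ) : ZMod q))⁻¹.val : ℕ) : ℤ)) (d := (a : ℤ) * l)
    (by rw [Int.cast_mul, Int.cast_natCast, hv, Int.cast_mul, Int.cast_natCast]; ring)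
  rw [heC]
  have hqne : (q:ℝ) ≠ 0 := ne_of_gt hq0
  have hcast : ((q * n + b : ℕ) : ℂ) = (((q : ℝ) * ((n : ℝ) + (b : ℝ) / (q : ℝ)) : ℝ) : ℂ) := by
    rw [show (q:ℝ) * ((n:ℝ) + (b:ℝ)/(q:ℝ)) = (q:ℝ)*(n:ℝ) + (b:ℝ) by field_simp]
    push_cast; ring
  have hcpow : ((q * n + b : ℕ) : ℂ) ^ (z - 1)
      = ((q : ℝ) : ℂ) ^ (z - 1) * ((((n : ℝ) + (b : ℝ) / (q : ℝ)) : ℝ) : ℂ) ^ (z - 1) := by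
    rw [hcast, Complex.ofReal_mul, mul_cpow_ofReal_nonneg hq0.le
      (add_nonneg (Nat.cast_nonneg _) (div_nonneg (Nat.cast_nonneg _) (Nat.cast_nonneg _)))]
  have hone : (1 : ℂ) / ((n : ℂ) + ((((b : ℝ) / (q : ℝ)) : ℝ) : ℂ)) ^ (1 - z)
      = ((((n : ℝ) + (b : ℝ) / (q : ℝ)) : ℝ) : ℂ) ^ (z - 1) := by
    rw [one_div, ← cpow_neg, neg_sub]
    congr 2
    push_cast; ring
  rw [hcpow, hone]
  have : ((q : ℕ) : ℂ) = (((q : ℝ)) : ℂ) := by push_cast; ring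
  rw [this]; ring

private lemma PW_minus (q : ℕ) (hq : 1 ≤ q) (l : ℤ) (z : ℂ) (hz : z.re < 0)
    (a b n : ℕ) (ha : a ∈ Finset.Icc 1 q) (hb : b ∈ Finset.Icc 1 q)
    (hab : (a * b) % q = 1 % q) :
    Fm q l z (q * n + (q - b)) = (q : ℂ) ^ (z - 1) * eC ((((a : ℤ) * l : ℤ) : ℝ) / q) *
      (1 / ((n : ℂ) + (((((q - b : ℕ) : ℝ)) / (q : ℝ) : ℝ) : ℂ)) ^ (1 - z)) := by
  haveI : NeZero q := ⟨by omega⟩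
  simp only [Finset.mem_Icc] at ha hb
  have hq0 : (0:ℝ) < q := by exact_mod_cast (by omega : 0 < q)
  have h1z : (1 : ℂ) - z ≠ 0 := by
    intro h; have := congrArg Complex.re h; simp [Complex.sub_re] at this; linarith
  have hble : b ≤ q := hb.2
  have hba : (b : ZMod q) * a = 1 := by rw [mul_comm]; exact cond_unit q a b hab
  have hbu : IsUnit ((b : ℕ) : ZMod q) := IsUnit.of_mul_eq_one _ hba
  by_cases hm0 : q * n + (q - b) = 0
  · have hqn : q * n = 0 := by omega
    have hn : n = 0 := (Nat.mul_eq_zero.mp hqn).resolve_left (by omega)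
    have hbq : q - b = 0 := by omega
    rw [hm0, hn, hbq, Fm, if_neg (by simp : ¬((1:ℕ) ≤ 0 ∧ Nat.gcd 0 q = 1))]
    simp [zero_cpow h1z]
  · have hcz : (((q - b : ℕ) : ℕ) : ZMod q) = -(b : ZMod q) := by
      rw [Nat.cast_sub hble, ZMod.natCast_self]; ring
    have hcop : Nat.Coprime (q - b) q := by
      refine (ZMod.isUnit_iff_coprime (q - b) q).mp ?_
      rw [hcz]; exact hbu.neg
    have hmcop : Nat.gcd (q * n + (q - b)) q = 1 := by
      have h2 : Nat.Coprime ((q - b) + q * n) q :=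
        (Nat.coprime_add_mul_left_left (q - b) q n).mpr hcop
      rwa [show (q - b) + q * n = q * n + (q - b) by omega] at h2
    rw [Fm, if_pos ⟨by omega, hmcop⟩]
    have hmz : ((q * n + (q - b) : ℕ) : ZMod q) = -(b : ZMod q) := by
      push_cast [ZMod.natCast_self]
      rw [Nat.cast_sub hble, ZMod.natCast_self]; ring
    have hinv : (((q * n + (q - b) : ℕ) : ZMod q))⁻¹ = -(a : ZMod q) :=
      zmod_inv_eq _ _ (by rw [hmz, neg_mul_neg]; exact hba)
    have hv : (((((q * n + (q - b) : ℕ) : ZMod q))⁻¹.val : ℕ) : ZMod q) = -(a : ZMod q) := by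
      rw [ZMod.natCast_rightInverse _, hinv]
    have heC := eC_congr' q (by omega)
      (c := -(l * (((((q * n + (q - b) : ℕ) : ZMod q))⁻¹.val : ℕ) : ℤ))) (d := (a : ℤ) * l)
      (by rw [Int.cast_neg, Int.cast_mul, Int.cast_natCast, hv, Int.cast_mul, Int.cast_natCast]
          ring)
    rw [heC]
    have hqne : (q:ℝ) ≠ 0 := ne_of_gt hq0
    have hcast : ((q * n + (q - b) : ℕ) : ℂ)
        = (((q : ℝ) * ((n : ℝ) + ((q - b : ℕ) : ℝ) / (q : ℝ)) : ℝ) : ℂ) := by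
      rw [show (q:ℝ) * ((n:ℝ) + ((q - b : ℕ):ℝ)/(q:ℝ)) = (q:ℝ)*(n:ℝ) + ((q - b : ℕ):ℝ) by
        field_simp]
      push_cast; ring
    have hcpow : ((q * n + (q - b) : ℕ) : ℂ) ^ (z - 1)
        = ((q : ℝ) : ℂ) ^ (z - 1) * ((((n : ℝ) + ((q - b : ℕ) : ℝ) / (q : ℝ)) : ℝ) : ℂ) ^ (z - 1) := by
      rw [hcast, Complex.ofReal_mul, mul_cpow_ofReal_nonneg hq0.le
        (add_nonneg (Nat.cast_nonneg _) (div_nonneg (Nat.cast_nonneg _) (Nat.cast_nonneg _)))]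
    have hone : (1 : ℂ) / ((n : ℂ) + (((((q - b : ℕ) : ℝ)) / (q : ℝ) : ℝ) : ℂ)) ^ (1 - z)
        = ((((n : ℝ) + ((q - b : ℕ) : ℝ) / (q : ℝ)) : ℝ) : ℂ) ^ (z - 1) := by
      rw [one_div, ← cpow_neg, neg_sub]
      congr 2
      push_cast; ring
    rw [hcpow, hone]
    have : ((q : ℕ) : ℂ) = (((q : ℝ)) : ℂ) := by push_cast; ring
    rw [this]; ring


set_option maxHeartbeats 2000000 in
private lemma neg_coe (q b : ℕ) (hq : 1 ≤ q) (hb : b ≤ q) :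
    -((((b : ℝ) / (q : ℝ) : ℝ)) : UnitAddCircle)
      = ((((q - b : ℕ) : ℝ) / (q : ℝ) : ℝ) : UnitAddCircle) := by
  have hq0 : (0:ℝ) < q := by exact_mod_cast (by omega : 0 < q)
  have h1 : (((q - b : ℕ) : ℝ) / (q : ℝ) : ℝ) = -((b : ℝ) / (q : ℝ)) + 1 := by
    rw [Nat.cast_sub hb]; field_simp; ring
  rw [h1, AddCircle.coe_add, AddCircle.coe_period, add_zero, AddCircle.coe_neg]

private lemma tsum_plus (q : ℕ) (hq : 1 ≤ q) (l : ℤ) (z : ℂ) (hz : z.re < 0)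
    (a b : ℕ) (ha : a ∈ Finset.Icc 1 q) (hb : b ∈ Finset.Icc 1 q)
    (hab : (a * b) % q = 1 % q) :
    eC ((((a : ℤ) * l : ℤ) : ℝ) / q) *
        HurwitzZeta.hurwitzZeta ((((b : ℝ) / (q : ℝ)) : ℝ) : UnitAddCircle) (1 - z)
      = (q : ℂ) ^ ((1:ℂ) - z) * ∑' n : ℕ, Fp q l z (q * n + b) := by
  have hq0 : (0:ℝ) < q := by exact_mod_cast (by omega : 0 < q)
  have hs1 : 1 < ((1:ℂ) - z).re := by
    simp only [Complex.sub_re, Complex.one_re]; linarith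
  have hmem : ((b : ℝ) / (q : ℝ)) ∈ Set.Icc (0:ℝ) 1 := by
    constructor
    · positivity
    · rw [div_le_one hq0]; exact_mod_cast (Finset.mem_Icc.mp hb).2
  have hH := (HurwitzZeta.hasSum_hurwitzZeta_of_one_lt_re hmem hs1).mul_left
    ((q : ℂ) ^ (z - 1) * eC ((((a : ℤ) * l : ℤ) : ℝ) / q))
  have hH2 : HasSum (fun n : ℕ => Fp q l z (q * n + b)) _ :=
    hH.congr_fun (fun n => PW_plus q hq l z a b n ha hb hab)
  rw [hH2.tsum_eq]
  have hqc : (q : ℂ) ≠ 0 := by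
    exact_mod_cast Nat.cast_ne_zero.mpr (by omega : q ≠ 0)
  have hqpow : (q : ℂ) ^ ((1:ℂ) - z) * (q : ℂ) ^ (z - 1) = 1 := by
    rw [← Complex.cpow_add _ _ hqc, show (1:ℂ) - z + (z - 1) = 0 by ring, Complex.cpow_zero]
  linear_combination (-(eC ((((a : ℤ) * l : ℤ) : ℝ) / q) *
    HurwitzZeta.hurwitzZeta ((((b : ℝ) / (q : ℝ)) : ℝ) : UnitAddCircle) (1 - z))) * hqpow

private lemma tsum_minus (q : ℕ) (hq : 1 ≤ q) (l : ℤ) (z : ℂ) (hz : z.re < 0)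
    (a b : ℕ) (ha : a ∈ Finset.Icc 1 q) (hb : b ∈ Finset.Icc 1 q)
    (hab : (a * b) % q = 1 % q) :
    eC ((((a : ℤ) * l : ℤ) : ℝ) / q) *
        HurwitzZeta.hurwitzZeta (-((((b : ℝ) / (q : ℝ)) : ℝ) : UnitAddCircle)) (1 - z)
      = (q : ℂ) ^ ((1:ℂ) - z) * ∑' n : ℕ, Fm q l z (q * n + (q - b)) := by
  have hq0 : (0:ℝ) < q := by exact_mod_cast (by omega : 0 < q)
  have hble : b ≤ q := (Finset.mem_Icc.mp hb).2
  rw [neg_coe q b hq hble]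
  have hs1 : 1 < ((1:ℂ) - z).re := by
    simp only [Complex.sub_re, Complex.one_re]; linarith
  have hmem : (((q - b : ℕ) : ℝ) / (q : ℝ)) ∈ Set.Icc (0:ℝ) 1 := by
    constructor
    · positivity
    · rw [div_le_one hq0]
      exact_mod_cast Nat.sub_le q b
  have hH := (HurwitzZeta.hasSum_hurwitzZeta_of_one_lt_re hmem hs1).mul_left
    ((q : ℂ) ^ (z - 1) * eC ((((a : ℤ) * l : ℤ) : ℝ) / q))
  have hH2 : HasSum (fun n : ℕ => Fm q l z (q * n + (q - b))) _ :=
    hH.congr_fun (fun n => PW_minus q hq l z hz a b n ha hb hab)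
  rw [hH2.tsum_eq]
  have hqc : (q : ℂ) ≠ 0 := by
    exact_mod_cast Nat.cast_ne_zero.mpr (by omega : q ≠ 0)
  have hqpow : (q : ℂ) ^ ((1:ℂ) - z) * (q : ℂ) ^ (z - 1) = 1 := by
    rw [← Complex.cpow_add _ _ hqc, show (1:ℂ) - z + (z - 1) = 0 by ring, Complex.cpow_zero]
  linear_combination (-(eC ((((a : ℤ) * l : ℤ) : ℝ) / q) *
    HurwitzZeta.hurwitzZeta (((((q - b : ℕ) : ℝ) / (q : ℝ)) : ℝ) : UnitAddCircle) (1 - z))) * hqpow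

private lemma pair_eq (q : ℕ) (hq : 1 ≤ q) (l : ℤ) (z : ℂ) (hz : z.re < 0)
    (a b : ℕ) (ha : a ∈ Finset.Icc 1 q) (hb : b ∈ Finset.Icc 1 q)
    (hab : (a * b) % q = 1 % q) :
    eC ((((a : ℤ) * l : ℤ) : ℝ) / q) *
      HurwitzZeta.expZeta ((((b : ℝ) / (q : ℝ)) : ℝ) : UnitAddCircle) z
    = Complex.Gamma (1 - z) * (2 * (Real.pi : ℂ)) ^ (z - 1) * (q : ℂ) ^ ((1:ℂ) - z) *
      (eC ((1 - z) / 4) * ∑' n : ℕ, Fp q l z (q * n + b) +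
       eC (-(1 - z) / 4) * ∑' n : ℕ, Fm q l z (q * n + (q - b))) := by
  have hsne : ∀ n : ℕ, (1 : ℂ) - z ≠ 1 - (n : ℂ) := by
    intro n hcontra
    have hz2 : z = (n : ℂ) := by linear_combination -hcontra
    rw [hz2] at hz
    simp only [Complex.natCast_re] at hz
    exact (Nat.cast_nonneg n).not_gt hz
  have hexp := HurwitzZeta.expZeta_one_sub
    ((((b : ℝ) / (q : ℝ)) : ℝ) : UnitAddCircle) (s := 1 - z) hsne
  rw [sub_sub_cancel] at hexp
  rw [show -((1:ℂ) - z) = z - 1 by ring] at hexp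
  have hE1 : Complex.exp ((Real.pi : ℂ) * I * (1 - z) / 2) = eC ((1 - z) / 4) := by
    rw [eC]; congr 1; ring
  have hE2 : Complex.exp (-(Real.pi : ℂ) * I * (1 - z) / 2) = eC (-(1 - z) / 4) := by
    rw [eC]; congr 1; ring
  rw [hE1, hE2] at hexp
  rw [hexp]
  have hp := tsum_plus q hq l z hz a b ha hb hab
  have hm := tsum_minus q hq l z hz a b ha hb hab
  linear_combination ((2 * (Real.pi : ℂ)) ^ (z - 1) * Complex.Gamma (1 - z) *
      eC ((1 - z) / 4)) * hp +
    ((2 * (Real.pi : ℂ)) ^ (z - 1) * Complex.Gamma (1 - z) * eC (-(1 - z) / 4)) * hm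

private lemma inj_aux (q : ℕ) (hq : 1 ≤ q) {c c' n n' : ℕ} (hc : c < q) (hc' : c' < q)
    (h : q * n + c = q * n' + c') : n = n' ∧ c = c' := by
  have hnn : n = n' := by
    rcases lt_trichotomy n n' with h1 | h1 | h1
    · exfalso
      have h2 : q * (n + 1) ≤ q * n' := Nat.mul_le_mul_left q h1
      have h3 : q * (n + 1) = q * n + q := by ring
      omega
    · exact h1
    · exfalso
      have h2 : q * (n' + 1) ≤ q * n := Nat.mul_le_mul_left q h1
      have h3 : q * (n' + 1) = q * n' + q := by ring
      omega
  subst hnn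
  omega

private lemma partner_unique (q : ℕ) (a a' b : ℕ) (ha : a ∈ Finset.Icc 1 q)
    (ha' : a' ∈ Finset.Icc 1 q) (h1 : (a * b) % q = 1 % q) (h2 : (a' * b) % q = 1 % q) :
    a = a' := by
  have hu1 : (a : ZMod q) * b = 1 := cond_unit q a b h1
  have hu2 : (a' : ZMod q) * b = 1 := cond_unit q a' b h2
  refine Icc_mod_inj q a a' ha ha' ?_
  calc (a : ZMod q) = a * (a' * b) := by rw [hu2, mul_one]
  _ = a' * (a * b) := by ring
  _ = a' := by rw [hu1, mul_one]

private lemma base_split (q : ℕ) (hq : 1 ≤ q) (z : ℂ) :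
    (((2 * Real.pi / q : ℝ)) : ℂ) ^ (z - 1)
      = (2 * (Real.pi : ℂ)) ^ (z - 1) * (q : ℂ) ^ ((1:ℂ) - z) := by
  have hq0 : (0:ℝ) < q := by exact_mod_cast (by omega : 0 < q)
  have h1 : (2 * Real.pi / q : ℝ) = (2 * Real.pi) * ((q : ℝ)⁻¹) := by ring
  rw [h1, Complex.ofReal_mul, mul_cpow_ofReal_nonneg (by positivity) (by positivity)]
  congr 1
  · norm_num
  · rw [Complex.ofReal_inv, inv_cpow _ _ (by
      rw [Complex.arg_ofReal_of_nonneg hq0.le]; exact Real.pi_ne_zero.symm),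
      ← Complex.cpow_neg, neg_sub]
    norm_num

theorem stmt4 (q : ℕ) (hq : 1 ≤ q) (l : ℤ) (z : ℂ) (hz : z.re < 0) :
    Summable (fun n : ℕ => ‖(if 1 ≤ n ∧ Nat.gcd n q = 1 then
        eC (((l * ((((n : ZMod q))⁻¹.val : ℕ) : ℤ) : ℤ) : ℝ) / q) * (n : ℂ) ^ (z - 1)
      else 0)‖) ∧
    Summable (fun n : ℕ => ‖(if 1 ≤ n ∧ Nat.gcd n q = 1 then
        eC (((-(l * ((((n : ZMod q))⁻¹.val : ℕ) : ℤ)) : ℤ) : ℝ) / q) * (n : ℂ) ^ (z - 1)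
      else 0)‖) ∧
    G q l z = Complex.Gamma (1 - z) * (((2 * Real.pi / q : ℝ) : ℂ)) ^ (z - 1) *
      (eC ((1 - z) / 4) *
          ∑' n : ℕ, (if 1 ≤ n ∧ Nat.gcd n q = 1 then
            eC (((l * ((((n : ZMod q))⁻¹.val : ℕ) : ℤ) : ℤ) : ℝ) / q) * (n : ℂ) ^ (z - 1)
          else 0) +
        eC (-(1 - z) / 4) *
          ∑' n : ℕ, (if 1 ≤ n ∧ Nat.gcd n q = 1 then
            eC (((-(l * ((((n : ZMod q))⁻¹.val : ℕ) : ℤ)) : ℤ) : ℝ) / q) * (n : ℂ) ^ (z - 1)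
          else 0)) := by
  classical
  haveI : NeZero q := ⟨by omega⟩
  have hSp : Summable (fun n : ℕ => ‖(if 1 ≤ n ∧ Nat.gcd n q = 1 then
      eC (((l * ((((n : ZMod q))⁻¹.val : ℕ) : ℤ) : ℤ) : ℝ) / q) * (n : ℂ) ^ (z - 1)
    else 0)‖) := summable_aux q z hz _ (fun n => norm_eC_div _ q)
  have hSm : Summable (fun n : ℕ => ‖(if 1 ≤ n ∧ Nat.gcd n q = 1 then
      eC (((-(l * ((((n : ZMod q))⁻¹.val : ℕ) : ℤ)) : ℤ) : ℝ) / q) * (n : ℂ) ^ (z - 1)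
    else 0)‖) := summable_aux q z hz _ (fun n => norm_eC_div _ q)
  refine ⟨hSp, hSm, ?_⟩
  have hFp : Summable (Fp q l z) := Summable.of_norm hSp
  have hFm : Summable (Fm q l z) := Summable.of_norm hSm
  set P : Finset (ℕ × ℕ) := ((Finset.Icc 1 q) ×ˢ (Finset.Icc 1 q)).filter
    (fun p => (p.1 * p.2) % q = 1 % q) with hP
  have hmemP : ∀ p ∈ P, p.1 ∈ Finset.Icc 1 q ∧ p.2 ∈ Finset.Icc 1 q ∧
      (p.1 * p.2) % q = 1 % q := by
    intro p hp
    rw [hP, Finset.mem_filter, Finset.mem_product] at hp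
    exact ⟨hp.1.1, hp.1.2, hp.2⟩
  have hPmem : ∀ a b : ℕ, a ∈ Finset.Icc 1 q → b ∈ Finset.Icc 1 q →
      (a * b) % q = 1 % q → (a, b) ∈ P := by
    intro a b ha hb hab
    rw [hP, Finset.mem_filter, Finset.mem_product]
    exact ⟨⟨ha, hb⟩, hab⟩
  have hG : G q l z = ∑ p ∈ P, (eC ((((p.1 : ℤ) * l : ℤ) : ℝ) / q) *
      HurwitzZeta.expZeta ((((p.2 : ℝ) / (q : ℝ)) : ℝ) : UnitAddCircle) z) := by
    rw [hP, Finset.sum_filter, Finset.sum_product]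
    rfl
  rw [hG, Finset.sum_congr rfl (fun p hp => pair_eq q hq l z hz p.1 p.2
    (hmemP p hp).1 (hmemP p hp).2.1 (hmemP p hp).2.2)]
  -- injectivity
  have hinjp : ∀ p ∈ P, ∀ p' ∈ P, ∀ n n' : ℕ,
      q * n + (fun b => b) p.2 = q * n' + (fun b => b) p'.2 → p = p' ∧ n = n' := by
    intro p hp p' hp' n n' h
    obtain ⟨hp1, hp2, hpc⟩ := hmemP p hp
    obtain ⟨hp1', hp2', hpc'⟩ := hmemP p' hp'
    simp only [Finset.mem_Icc] at hp2 hp2'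
    simp only at h
    have h' : q * n + (p.2 - 1) = q * n' + (p'.2 - 1) := by omega
    obtain ⟨hnn, hcc⟩ := inj_aux q hq (show p.2 - 1 < q by omega)
      (show p'.2 - 1 < q by omega) h'
    have hb2 : p.2 = p'.2 := by omega
    have ha2 : p.1 = p'.1 := partner_unique q p.1 p'.1 p.2 hp1 hp1' hpc (hb2 ▸ hpc')
    exact ⟨Prod.ext ha2 hb2, hnn⟩
  have hinjm : ∀ p ∈ P, ∀ p' ∈ P, ∀ n n' : ℕ,
      q * n + (fun b => q - b) p.2 = q * n' + (fun b => q - b) p'.2 → p = p' ∧ n = n' := by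
    intro p hp p' hp' n n' h
    obtain ⟨hp1, hp2, hpc⟩ := hmemP p hp
    obtain ⟨hp1', hp2', hpc'⟩ := hmemP p' hp'
    simp only [Finset.mem_Icc] at hp2 hp2'
    simp only at h
    obtain ⟨hnn, hcc⟩ := inj_aux q hq (show q - p.2 < q by omega)
      (show q - p'.2 < q by omega) h
    have hb2 : p.2 = p'.2 := by omega
    have ha2 : p.1 = p'.1 := partner_unique q p.1 p'.1 p.2 hp1 hp1' hpc (hb2 ▸ hpc')
    exact ⟨Prod.ext ha2 hb2, hnn⟩
  -- coverage
  have hcovp : ∀ m, Fp q l z m ≠ 0 → ∃ p ∈ P, ∃ n, q * n + (fun b => b) p.2 = m := by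
    intro m hm
    have hcond : 1 ≤ m ∧ Nat.gcd m q = 1 := by
      by_contra hc; rw [Fp, if_neg hc] at hm; exact hm rfl
    have hmu : IsUnit ((m : ℕ) : ZMod q) := (ZMod.isUnit_iff_coprime m q).mpr hcond.2
    by_cases h0 : m % q = 0
    · have hqu : IsUnit ((q : ℕ) : ZMod q) := by
        have hqm : ((q : ℕ) : ZMod q) = (m : ZMod q) := by
          rw [ZMod.natCast_eq_natCast_iff', Nat.mod_self, h0]
        rw [hqm]; exact hmu
      obtain ⟨a, haI, hab⟩ := exists_partner q hq q hqu
      obtain ⟨t, ht⟩ : ∃ t, m = q * t :=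
        ⟨m / q, (Nat.mul_div_cancel' (Nat.dvd_of_mod_eq_zero h0)).symm⟩
      have ht1 : 1 ≤ t := by
        rcases Nat.eq_zero_or_pos t with h1 | h1
        · rw [h1, Nat.mul_zero] at ht; omega
        · exact h1
      refine ⟨(a, q), hPmem a q haI (Finset.mem_Icc.mpr ⟨hq, le_refl q⟩) hab, t - 1, ?_⟩
      show q * (t - 1) + q = m
      have h2 : q * (t - 1) + q = q * t := by
        cases t with
        | zero => omega
        | succ s => simp [Nat.mul_succ]
      omega
    · have hb1 : 1 ≤ m % q := by omega
      have hbq : m % q ≤ q := le_of_lt (Nat.mod_lt m (by omega))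
      have hbz : ((m % q : ℕ) : ZMod q) = (m : ZMod q) := by
        rw [ZMod.natCast_eq_natCast_iff']
        exact Nat.mod_mod_of_dvd m (dvd_refl q)
      have hbu : IsUnit ((m % q : ℕ) : ZMod q) := by rw [hbz]; exact hmu
      obtain ⟨a, haI, hab⟩ := exists_partner q hq (m % q) hbu
      refine ⟨(a, m % q), hPmem a (m % q) haI (Finset.mem_Icc.mpr ⟨hb1, hbq⟩) hab, m / q, ?_⟩
      show q * (m / q) + m % q = m
      exact Nat.div_add_mod m q
  have hcovm : ∀ m, Fm q l z m ≠ 0 → ∃ p ∈ P, ∃ n, q * n + (fun b => q - b) p.2 = m := by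
    intro m hm
    have hcond : 1 ≤ m ∧ Nat.gcd m q = 1 := by
      by_contra hc; rw [Fm, if_neg hc] at hm; exact hm rfl
    have hmu : IsUnit ((m : ℕ) : ZMod q) := (ZMod.isUnit_iff_coprime m q).mpr hcond.2
    have hmlt : m % q < q := Nat.mod_lt m (by omega)
    have hb1 : 1 ≤ q - m % q := by omega
    have hbq : q - m % q ≤ q := by omega
    have hmz : ((m % q : ℕ) : ZMod q) = (m : ZMod q) := by
      rw [ZMod.natCast_eq_natCast_iff']
      exact Nat.mod_mod_of_dvd m (dvd_refl q)
    have hbz : ((q - m % q : ℕ) : ZMod q) = -(m : ZMod q) := by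
      rw [Nat.cast_sub (le_of_lt hmlt), ZMod.natCast_self, hmz]; ring
    have hbu : IsUnit ((q - m % q : ℕ) : ZMod q) := by rw [hbz]; exact hmu.neg
    obtain ⟨a, haI, hab⟩ := exists_partner q hq (q - m % q) hbu
    refine ⟨(a, q - m % q), hPmem a (q - m % q) haI (Finset.mem_Icc.mpr ⟨hb1, hbq⟩) hab,
      m / q, ?_⟩
    show q * (m / q) + (q - (q - m % q)) = m
    have h1 : q - (q - m % q) = m % q := by omega
    rw [h1]
    exact Nat.div_add_mod m q
  have hcombp := comb q hq (Fp q l z) hFp P (fun b => b) hinjp hcovp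
  have hcombm := comb q hq (Fm q l z) hFm P (fun b => q - b) hinjm hcovm
  have hsum : ∑ p ∈ P, (Complex.Gamma (1 - z) * (2 * (Real.pi : ℂ)) ^ (z - 1) *
        (q : ℂ) ^ ((1:ℂ) - z) *
      (eC ((1 - z) / 4) * ∑' n : ℕ, Fp q l z (q * n + p.2) +
       eC (-(1 - z) / 4) * ∑' n : ℕ, Fm q l z (q * n + (q - p.2))))
      = Complex.Gamma (1 - z) * ((2 * (Real.pi : ℂ)) ^ (z - 1) * (q : ℂ) ^ ((1:ℂ) - z)) *
      (eC ((1 - z) / 4) * ∑' m, Fp q l z m + eC (-(1 - z) / 4) * ∑' m, Fm q l z m) := by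
    rw [← hcombp, ← hcombm]
    rw [← Finset.mul_sum, Finset.sum_add_distrib, ← Finset.mul_sum, ← Finset.mul_sum]
    ring
  rw [hsum, base_split q hq z]
  have hTp : ∑' m, Fp q l z m = ∑' n : ℕ, (if 1 ≤ n ∧ Nat.gcd n q = 1 then
      eC (((l * ((((n : ZMod q))⁻¹.val : ℕ) : ℤ) : ℤ) : ℝ) / q) * (n : ℂ) ^ (z - 1)
    else 0) := rfl
  have hTm : ∑' m, Fm q l z m = ∑' n : ℕ, (if 1 ≤ n ∧ Nat.gcd n q = 1 then
      eC (((-(l * ((((n : ZMod q))⁻¹.val : ℕ) : ℤ)) : ℤ) : ℝ) / q) * (n : ℂ) ^ (z - 1)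
    else 0) := rfl
  rw [hTp, hTm]
end

section
/- Let p be a prime, q a positive integer divisible by p², l an integer with gcd(l,p) = 1, and n any integer. Then Σ_{b} e(l·b̄/q) = 0, where the sum runs over all b ∈ {1,…,q} with gcd(b,q) = 1 and b ≡ n (mod q/p), and b̄ ∈ {1,…,q} is the inverse of b modulo q. -/
open Complex

lemma eC_add (a b : ℂ) : eC (a + b) = eC a * eC b := by
  simp [eC, mul_add, Complex.exp_add]

lemma eC_nat_mul (j : ℕ) (z : ℂ) : eC ((j : ℂ) * z) = eC z ^ j := by
  rw [eC, eC, show 2 * (Real.pi : ℂ) * Complex.I * ((j : ℂ) * z)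
    = (j : ℂ) * (2 * Real.pi * Complex.I * z) by ring, Complex.exp_nat_mul]

theorem stmt10 (p q : ℕ) (hp : p.Prime) (hq : 0 < q) (hpq : p ^ 2 ∣ q)
    (l : ℤ) (hl : Int.gcd l p = 1) (n : ℤ) :
    ∑ b ∈ Finset.filter
        (fun b => Nat.gcd b q = 1 ∧ (b : ℤ) % ((q / p : ℕ) : ℤ) = n % ((q / p : ℕ) : ℤ))
        (Finset.Icc 1 q),
      eC (((l * ((((b : ZMod q))⁻¹.val : ℕ) : ℤ) : ℤ) : ℝ) / q) = 0 := by
  classical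
  set d : ℕ := q / p with hdd
  have hp2 : 2 ≤ p := hp.two_le
  have hppq : p ∣ q := dvd_trans (dvd_pow_self p two_ne_zero) hpq
  have hqpd : q = p * d := (Nat.mul_div_cancel' hppq).symm
  have hpd : p ∣ d := by
    rcases hpq with ⟨k, hk⟩
    refine ⟨k, Nat.eq_of_mul_eq_mul_left (by omega : 0 < p) ?_⟩
    rw [← hqpd, hk]; ring
  have hd2 : 2 ≤ d := le_trans hp2 (Nat.le_of_dvd (by
    exact Nat.div_pos (Nat.le_of_dvd hq hppq) (by omega)) hpd)
  have hq2 : 2 ≤ q := by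
    have := Nat.mul_le_mul hp2 hd2
    omega
  haveI : NeZero q := ⟨by omega⟩
  haveI : NeZero d := ⟨by omega⟩
  have hdq : d ∣ q := ⟨p, by rw [hqpd]; ring⟩
  set S := Finset.filter
      (fun b => Nat.gcd b q = 1 ∧ (b : ℤ) % ((d : ℕ) : ℤ) = n % ((d : ℕ) : ℤ))
      (Finset.Icc 1 q) with hSS
  rcases S.eq_empty_or_nonempty with hS | ⟨b0, hb0⟩
  · rw [hS, Finset.sum_empty]
  -- coprimality transfer
  have hcdq : ∀ b : ℕ, Nat.Coprime b d → Nat.Coprime b q := by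
    intro b h
    rw [hqpd]
    exact Nat.Coprime.mul_right (Nat.Coprime.coprime_dvd_right hpd h) h
  have hcqd : ∀ b : ℕ, Nat.Coprime b q → Nat.Coprime b d := fun b h =>
    Nat.Coprime.coprime_dvd_right hdq h
  -- data from the witness b0
  rw [hSS, Finset.mem_filter, Finset.mem_Icc] at hb0
  obtain ⟨⟨hb01, hb0q⟩, hb0cop, hb0mod⟩ := hb0
  set ν : ZMod d := ((n : ℤ) : ZMod d) with hνdef
  have hb0d : (b0 : ZMod d) = ν := by
    have h := (ZMod.intCast_eq_intCast_iff (b0 : ℤ) n d).mpr hb0mod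
    rwa [Int.cast_natCast] at h
  have hν : IsUnit ν := by
    rw [← hb0d]
    exact (ZMod.isUnit_iff_coprime _ _).mpr (hcqd b0 hb0cop)
  set u : ZMod d := ν⁻¹ with hudef
  have huν : u * ν = 1 := ZMod.inv_mul_of_unit ν hν
  have hu : IsUnit u := IsUnit.of_mul_eq_one (a := u) ν huν
  set r : ℕ := u.val with hrdef
  have hrd : r < d := ZMod.val_lt u
  have hru : (r : ZMod d) = u := by rw [hrdef, ZMod.natCast_val, ZMod.cast_id]
  have hrcop : Nat.Coprime r d := (ZMod.isUnit_iff_coprime r d).mp (by rw [hru]; exact hu)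
  have hr1 : 1 ≤ r := by
    rcases Nat.eq_zero_or_pos r with h | h
    · rw [h, Nat.coprime_zero_left] at hrcop; omega
    · exact h
  -- key facts about inverses
  have hcastval : ∀ b : ℕ, ((((b : ZMod q)⁻¹).val : ℕ) : ZMod q) = (b : ZMod q)⁻¹ := by
    intro b; rw [ZMod.natCast_val, ZMod.cast_id]
  have key : ∀ b : ℕ, Nat.gcd b q = 1 →
      ((((b : ZMod q)⁻¹).val : ℕ) : ZMod d) * (b : ZMod d) = 1 := by
    intro b hb
    have hub : IsUnit (b : ZMod q) := (ZMod.isUnit_iff_coprime b q).mpr hb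
    have h1 : (b : ZMod q)⁻¹ * (b : ZMod q) = 1 := ZMod.inv_mul_of_unit _ hub
    have h2 := congrArg (ZMod.castHom hdq (ZMod d)) h1
    rw [map_mul, map_one, ← hcastval b, map_natCast, map_natCast] at h2
    exact h2
  have hccop : ∀ b : ℕ, Nat.gcd b q = 1 → Nat.gcd ((b : ZMod q)⁻¹).val q = 1 := by
    intro b hb
    have hub : IsUnit (b : ZMod q) := (ZMod.isUnit_iff_coprime b q).mpr hb
    have hu2 : IsUnit ((((b : ZMod q)⁻¹).val : ℕ) : ZMod q) := by
      rw [hcastval b]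
      exact IsUnit.of_mul_eq_one _ (ZMod.inv_mul_of_unit _ hub)
    exact (ZMod.isUnit_iff_coprime _ _).mp hu2
  have hc1 : ∀ b : ℕ, Nat.gcd b q = 1 → 1 ≤ ((b : ZMod q)⁻¹).val := by
    intro b hb
    rcases Nat.eq_zero_or_pos ((b : ZMod q)⁻¹).val with h | h
    · have := hccop b hb
      rw [h] at this
      simp [Nat.coprime_zero_left] at this
      omega
    · exact h
  have hinv2 : ∀ b : ℕ, Nat.gcd b q = 1 → b < q →
      ((((((b : ZMod q)⁻¹).val : ℕ) : ZMod q))⁻¹).val = b := by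
    intro b hb hbq
    have hub : IsUnit (b : ZMod q) := (ZMod.isUnit_iff_coprime b q).mpr hb
    rw [hcastval b]
    have h1 : (b : ZMod q)⁻¹ * (b : ZMod q) = 1 := ZMod.inv_mul_of_unit _ hub
    have hu2 : IsUnit ((b : ZMod q)⁻¹) := IsUnit.of_mul_eq_one _ h1
    have h3 : ((b : ZMod q)⁻¹)⁻¹ * ((b : ZMod q)⁻¹) = 1 := ZMod.inv_mul_of_unit _ hu2
    have hinv : ((b : ZMod q)⁻¹)⁻¹ = (b : ZMod q) := by
      calc ((b : ZMod q)⁻¹)⁻¹ = ((b : ZMod q)⁻¹)⁻¹ * ((b : ZMod q)⁻¹ * (b : ZMod q)) := by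
            rw [h1, mul_one]
        _ = (((b : ZMod q)⁻¹)⁻¹ * (b : ZMod q)⁻¹) * (b : ZMod q) := by ring
        _ = (b : ZMod q) := by rw [h3, one_mul]
    rw [hinv, ZMod.val_cast_of_lt hbq]
  -- elements of S are < q
  have hbltq : ∀ b : ℕ, Nat.gcd b q = 1 → b ≤ q → b < q := by
    intro b hb hbq
    rcases Nat.lt_or_ge b q with h | h
    · exact h
    · exfalso
      have : b = q := le_antisymm hbq h
      rw [this, Nat.gcd_self] at hb
      omega
  -- the target sum
  set T := Finset.filter (fun c => Nat.gcd c q = 1 ∧ c % d = r) (Finset.Icc 1 q) with hTT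
  have hbij : (∑ b ∈ S, eC (((l * ((((b : ZMod q))⁻¹.val : ℕ) : ℤ) : ℤ) : ℝ) / q))
      = ∑ c ∈ T, eC (((l * (c : ℤ) : ℤ) : ℝ) / q) := by
    refine Finset.sum_nbij' (fun b => ((b : ZMod q)⁻¹).val) (fun c => ((c : ZMod q)⁻¹).val)
      ?_ ?_ ?_ ?_ ?_
    · -- maps S to T
      intro b hb
      rw [hSS, Finset.mem_filter, Finset.mem_Icc] at hb
      obtain ⟨⟨h1, h2⟩, h3, h4⟩ := hb
      rw [hTT, Finset.mem_filter, Finset.mem_Icc]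
      refine ⟨⟨hc1 b h3, le_of_lt (ZMod.val_lt _)⟩, hccop b h3, ?_⟩
      -- mod d condition
      have hbd : (b : ZMod d) = ν := by
        have h := (ZMod.intCast_eq_intCast_iff (b : ℤ) n d).mpr h4
        rwa [Int.cast_natCast] at h
      have hk := key b h3
      rw [hbd] at hk
      have hcu : ((((b : ZMod q)⁻¹).val : ℕ) : ZMod d) = u := by
        calc ((((b : ZMod q)⁻¹).val : ℕ) : ZMod d)
            = ((((b : ZMod q)⁻¹).val : ℕ) : ZMod d) * (ν * u) := by
              rw [mul_comm ν u, huν, mul_one]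
          _ = (((((b : ZMod q)⁻¹).val : ℕ) : ZMod d) * ν) * u := by ring
          _ = u := by rw [hk, one_mul]
      have := congrArg ZMod.val hcu
      rwa [ZMod.val_natCast] at this
    · -- maps T to S
      intro c hc
      rw [hTT, Finset.mem_filter, Finset.mem_Icc] at hc
      obtain ⟨⟨h1, h2⟩, h3, h4⟩ := hc
      rw [hSS, Finset.mem_filter, Finset.mem_Icc]
      refine ⟨⟨hc1 c h3, le_of_lt (ZMod.val_lt _)⟩, hccop c h3, ?_⟩
      have hcd : (c : ZMod d) = u := by
        rw [← hru, ZMod.natCast_eq_natCast_iff' c r d, h4, Nat.mod_eq_of_lt hrd]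
      have hk := key c h3
      rw [hcd] at hk
      have hbν : ((((c : ZMod q)⁻¹).val : ℕ) : ZMod d) = ν := by
        calc ((((c : ZMod q)⁻¹).val : ℕ) : ZMod d)
            = ((((c : ZMod q)⁻¹).val : ℕ) : ZMod d) * (u * ν) := by rw [huν, mul_one]
          _ = (((((c : ZMod q)⁻¹).val : ℕ) : ZMod d) * u) * ν := by ring
          _ = ν := by rw [hk, one_mul]
      have : (((((c : ZMod q)⁻¹).val : ℕ) : ℤ) : ZMod d) = ((n : ℤ) : ZMod d) := by
        rw [Int.cast_natCast, hbν]
      exact (ZMod.intCast_eq_intCast_iff _ _ _).mp this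
    · -- left inverse
      intro b hb
      rw [hSS, Finset.mem_filter, Finset.mem_Icc] at hb
      exact hinv2 b hb.2.1 (hbltq b hb.2.1 hb.1.2)
    · -- right inverse
      intro c hc
      rw [hTT, Finset.mem_filter, Finset.mem_Icc] at hc
      exact hinv2 c hc.2.1 (hbltq c hc.2.1 hc.1.2)
    · intro b _; rfl
  rw [hbij]
  -- T is an arithmetic progression
  have hT : T = Finset.image (fun j => r + j * d) (Finset.range p) := by
    rw [hTT]
    ext c
    simp only [Finset.mem_filter, Finset.mem_Icc, Finset.mem_image, Finset.mem_range]
    constructor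
    · rintro ⟨⟨h1, h2⟩, _, hcr⟩
      have hcltq : c < q := by
        rcases Nat.lt_or_ge c q with h | h
        · exact h
        · exfalso
          have hcq : c = q := le_antisymm h2 h
          have : q % d = 0 := by rw [hqpd]; exact Nat.mul_mod_left p d
          rw [hcq, this] at hcr
          omega
      refine ⟨c / d, ?_, ?_⟩
      · rw [Nat.div_lt_iff_lt_mul (by omega : 0 < d)]
        rw [← hqpd]
        exact hcltq
      · have hdc : d * (c / d) + r = c := by rw [← hcr]; exact Nat.div_add_mod c d
        rw [mul_comm, add_comm]
        exact hdc
    · rintro ⟨j, hj, rfl⟩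
      refine ⟨⟨le_trans hr1 (Nat.le_add_right _ _), ?_⟩, ?_, ?_⟩
      · refine le_of_lt ?_
        calc r + j * d < d + j * d := Nat.add_lt_add_right hrd (j * d)
          _ = (j + 1) * d := by ring
          _ ≤ p * d := Nat.mul_le_mul_right d hj
          _ = q := hqpd.symm
      · exact hcdq _ ((Nat.coprime_add_mul_right_left r d j).mpr hrcop)
      · rw [Nat.add_mul_mod_self_right, Nat.mod_eq_of_lt hrd]
  rw [hT, Finset.sum_image (by
    intro a _ b _ h
    exact Nat.eq_of_mul_eq_mul_right (by omega : 0 < d) (Nat.add_left_cancel h))]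
  -- now a geometric sum
  have hp0 : (p : ℂ) ≠ 0 := by
    exact_mod_cast Nat.cast_ne_zero.mpr (by omega : p ≠ 0)
  have hd0 : (d : ℂ) ≠ 0 := by
    exact_mod_cast Nat.cast_ne_zero.mpr (by omega : d ≠ 0)
  have hq0 : (q : ℂ) ≠ 0 := by
    exact_mod_cast Nat.cast_ne_zero.mpr (by omega : q ≠ 0)
  have hpdq : (p : ℂ) * d = q := by exact_mod_cast congrArg (Nat.cast : ℕ → ℂ) hqpd.symm
  set ζ : ℂ := eC ((l : ℂ) / (p : ℂ)) with hζdef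
  have hsummand : ∀ j : ℕ,
      eC ((((l * ((r + j * d : ℕ) : ℤ) : ℤ) : ℝ) : ℂ) / (q : ℂ))
      = eC ((((l * (r : ℤ) : ℤ) : ℝ) : ℂ) / (q : ℂ)) * ζ ^ j := by
    intro j
    have hx : (((l * ((r + j * d : ℕ) : ℤ) : ℤ) : ℝ) : ℂ) / (q : ℂ)
        = (((l * (r : ℤ) : ℤ) : ℝ) : ℂ) / (q : ℂ) + (j : ℂ) * ((l : ℂ) / (p : ℂ)) := by
      rw [← hpdq]
      push_cast
      field_simp
    rw [hx, eC_add, eC_nat_mul, hζdef]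
  rw [Finset.sum_congr rfl (fun j _ => hsummand j), ← Finset.mul_sum]
  have hζ1 : ζ ≠ 1 := by
    intro h
    rw [hζdef, eC, Complex.exp_eq_one_iff] at h
    obtain ⟨k, hk⟩ := h
    have h2 : (2 * (Real.pi : ℂ) * Complex.I) * ((l : ℂ) / (p : ℂ))
        = (2 * (Real.pi : ℂ) * Complex.I) * (k : ℂ) := by rw [hk]; ring
    have h3 := mul_left_cancel₀ Complex.two_pi_I_ne_zero h2
    have h5 : (l : ℂ) = (k : ℂ) * (p : ℂ) := by
      field_simp at h3
      linear_combination h3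
    have h6 : l = k * (p : ℤ) := by exact_mod_cast h5
    have hdvd : (p : ℤ) ∣ l := ⟨k, by rw [h6]; ring⟩
    have h7 := Int.dvd_gcd hdvd (dvd_refl (p : ℤ))
    rw [hl] at h7
    have h8 : p ∣ 1 := by exact_mod_cast h7
    have h9 := Nat.dvd_one.mp h8
    omega
  have hζp : ζ ^ p = 1 := by
    rw [hζdef, ← eC_nat_mul]
    have hpc : ((p : ℂ)) * ((l : ℂ) / (p : ℂ)) = (l : ℂ) := by
      field_simp
    rw [hpc, eC, show 2 * (Real.pi : ℂ) * Complex.I * (l : ℂ)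
        = (l : ℂ) * (2 * Real.pi * Complex.I) by ring]
    exact Complex.exp_int_mul_two_pi_mul_I l
  rw [geom_sum_eq hζ1, hζp, sub_self, zero_div, mul_zero]
end
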